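/- Let k ≥ 2 and let (Q, δ, q₀, τ) be a k-DFAO with finite state set Q, transition function δ : Q × {0, …, k−1} → Q, initial state q₀ ∈ Q, and output function τ : Q → A (A any set), and let f : ℕ → A be the sequence it generates by reading base-k digits least-significant-digit first: f(n) = τ(δ*(q₀, base-k digits of n, LSD first)). Then there exist natural numbers r < t such that for every b with 0 ≤ b < k^t there exists a with 0 ≤ a < k^r such that f(k^t·n + b) = f(k^r·n + a) for all n ≥ 0. -/
import Mathlib


/-- Extended transition function of a DFAO, reading the word left to right
(least-significant digit first): `dstar δ q [] = q` and
`dstar δ q (d :: w) = dstar δ (δ q d) w`. -/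
def dstar {Q D : Type*} (δ : Q → D → Q) : Q → List D → Q
  | q, [] => q
  | q, d :: w => dstar δ (δ q d) w

theorem dstar_append {Q : Type*} (δ : Q → ℕ → Q) (q : Q) (w₁ w₂ : List ℕ) :
    dstar δ q (w₁ ++ w₂) = dstar δ (dstar δ q w₁) w₂ := by
  induction w₁ generalizing q with
  | nil => rfl
  | cons d w ih => simp [dstar, ih]

/-- `b` padded with zeros to length (at least) `t`. -/
def padD (k t b : ℕ) : List ℕ :=
  Nat.digits k b ++ List.replicate (t - (Nat.digits k b).length) 0

theorem padD_succ (k : ℕ) (hk : 2 ≤ k) (t b : ℕ) :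
    padD k (t + 1) b = b % k :: padD k t (b / k) := by
  rcases eq_or_ne b 0 with rfl | hb
  · simp [padD, List.replicate_succ]
  · rw [padD, padD, Nat.digits_def' (by omega) (Nat.pos_of_ne_zero hb)]
    simp [Nat.succ_sub_succ]

theorem digits_pow_mul_add (k : ℕ) (hk : 2 ≤ k) :
    ∀ t b n : ℕ, b < k ^ t → 0 < n →
      Nat.digits k (k ^ t * n + b) = padD k t b ++ Nat.digits k n := by
  intro t
  induction t with
  | zero =>
    intro b n hb hn
    have hb0 : b = 0 := by simpa using hb
    subst hb0
    simp [padD]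
  | succ t ih =>
    intro b n hb hn
    have hm : 0 < k ^ (t + 1) * n + b := by positivity
    have e : k ^ (t + 1) * n + b = k * (k ^ t * n) + b := by ring
    have hdiv : b / k < k ^ t := by
      rw [Nat.div_lt_iff_lt_mul (by omega)]
      calc b < k ^ (t + 1) := hb
        _ = k ^ t * k := by ring
    rw [Nat.digits_def' (by omega : 1 < k) hm, e, Nat.mul_add_mod,
      Nat.mul_add_div (by omega), ih (b / k) n hdiv hn, padD_succ k hk]
    simp

theorem stmt_9 (k : ℕ) (hk : 2 ≤ k) {Q A : Type*} [Fintype Q]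
    (δ : Q → Fin k → Q) (q₀ : Q) (τ : Q → A) (f : ℕ → A)
    (hf : ∀ n : ℕ, f n =
      τ (dstar (fun (q : Q) (d : ℕ) => δ q ⟨d % k, Nat.mod_lt d (by omega)⟩)
          q₀ (Nat.digits k n))) :
    ∃ r t : ℕ, r < t ∧ ∀ b < k ^ t, ∃ a < k ^ r,
      ∀ n : ℕ, f (k ^ t * n + b) = f (k ^ r * n + a) := by
  classical
  let δ' : Q → ℕ → Q := fun q d => δ q ⟨d % k, Nat.mod_lt d (by omega)⟩
  have hf' : ∀ n, f n = τ (dstar δ' q₀ (Nat.digits k n)) := hf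
  let H : ℕ → ℕ → Q × Q := fun t b =>
    (dstar δ' q₀ (padD k t b), dstar δ' q₀ (Nat.digits k b))
  let S : ℕ → Set (Q × Q) := fun t => H t '' Set.Iio (k ^ t)
  have main : ∀ r t : ℕ, S r = S t →
      ∀ b < k ^ t, ∃ a < k ^ r, ∀ n : ℕ, f (k ^ t * n + b) = f (k ^ r * n + a) := by
    intro r t hS b hb
    have hmem : H t b ∈ S r := by
      rw [hS]; exact ⟨b, hb, rfl⟩
    obtain ⟨a, ha, hHa⟩ := hmem
    refine ⟨a, ha, fun n => ?_⟩
    rcases Nat.eq_zero_or_pos n with rfl | hn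
    · simp only [Nat.mul_zero, Nat.zero_add, hf']
      have := congrArg Prod.snd hHa
      simp only [H] at this
      rw [this]
    · rw [hf', hf', digits_pow_mul_add k hk t b n hb hn,
        digits_pow_mul_add k hk r a n ha hn, dstar_append, dstar_append]
      have := congrArg Prod.fst hHa
      simp only [H] at this
      rw [this]
  have hfin : Finite (Set (Q × Q)) := inferInstance
  obtain ⟨x, y, hxy, hSxy⟩ := Finite.exists_ne_map_eq_of_infinite S
  rcases hxy.lt_or_gt with h | h
  · exact ⟨x, y, h, main x y hSxy⟩
  · exact ⟨y, x, h, main y x hSxy.symm⟩
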